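/- Let k < n/2 be positive integers. If G is a simple (2k+1)-regular graph on n vertices containing a spanning copy C of the k-th power of the cycle C_n, and M = E(G) \ E(C), then G admits an M-centered decomposition into paths with 2k+1 edges. -/

import Mathlib

open SimpleGraph

/-- The `k`-th power of the cycle on `n` vertices: vertices are `ZMod n`, and `x` is adjacent
to `y` iff `x - y ≡ r (mod n)` for some integer `r` with `1 ≤ |r| ≤ k` (the condition
`|r| ≥ 1` is forced by `x ≠ y`). -/
def cyclePower (n k : ℕ) : SimpleGraph (ZMod n) where
  Adj x y := x ≠ y ∧ ∃ r : ℤ, r.natAbs ≤ k ∧ x - y = (r : ZMod n)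
  symm := by
    constructor
    rintro x y ⟨hxy, r, hr, h⟩
    exact ⟨hxy.symm, -r, by simpa using hr, by rw [Int.cast_neg, ← h, neg_sub]⟩
  loopless := by constructor; rintro x ⟨h, -⟩; exact h rfl

private def zo (j : ℕ) : ℤ := if j % 2 = 0 then -((j/2 : ℕ) : ℤ) else ((j+1)/2 : ℕ)

private lemma zo_zero : zo 0 = 0 := by simp [zo]

private lemma zo_step (j : ℕ) : (zo (j+1) - zo j).natAbs = j + 1 := by
  simp only [zo]; split_ifs <;> omega

private lemma zo_inj {i i' : ℕ} (h : zo i = zo i') : i = i' := by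
  simp only [zo] at h; split_ifs at h <;> omega

private lemma zo_sub_le {i i' m : ℕ} (hi : i ≤ m) (hi' : i' ≤ m) :
    (zo i - zo i').natAbs ≤ m := by
  simp only [zo]; split_ifs <;> omega

private lemma zo_case1 {i i' : ℕ} (h : zo (i+1) - zo i = zo (i'+1) - zo i') : i = i' := by
  simp only [zo] at h; split_ifs at h <;> omega

private lemma zo_case2 {i i' : ℕ} (h : zo (i+1) - zo i = zo i' - zo (i'+1)) : False := by
  simp only [zo] at h; split_ifs at h <;> omega

private lemma zo_pm (s : ℕ) (hs : 1 ≤ s) : zo s - zo (s-1) = s ∨ zo s - zo (s-1) = -(s:ℤ) := by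
  simp only [zo]; split_ifs <;> omega

private def zig {V : Type*} (G : SimpleGraph V) (p : ℕ → V) :
    (j : ℕ) → (∀ i < j, G.Adj (p (i+1)) (p i)) → G.Walk (p j) (p 0)
  | 0, _ => Walk.nil
  | (j+1), h => Walk.cons (h j (Nat.lt_succ_self j))
      (zig G p j (fun i hi => h i (Nat.lt_succ_of_lt hi)))

private lemma zig_length {V : Type*} (G : SimpleGraph V) (p : ℕ → V) (j : ℕ)
    (h : ∀ i < j, G.Adj (p (i+1)) (p i)) : (zig G p j h).length = j := by
  induction j with
  | zero => rfl
  | succ j ih => simp [zig, ih]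

private lemma zig_support {V : Type*} (G : SimpleGraph V) (p : ℕ → V) (j : ℕ)
    (h : ∀ i < j, G.Adj (p (i+1)) (p i)) :
    (zig G p j h).support = (List.range (j+1)).reverse.map p := by
  induction j with
  | zero => simp [zig, List.range_succ]
  | succ j ih => simp [zig, ih, List.range_succ]

private lemma zig_edges {V : Type*} (G : SimpleGraph V) (p : ℕ → V) (j : ℕ)
    (h : ∀ i < j, G.Adj (p (i+1)) (p i)) :
    (zig G p j h).edges = (List.range j).reverse.map (fun i => s(p (i+1), p i)) := by
  induction j with
  | zero => simp [zig, List.range_succ]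
  | succ j ih => simp [zig, ih, List.range_succ]

theorem stmt_3 (n k : ℕ) (hk : 0 < k) (hn : 2 * k < n)
    (G C : SimpleGraph (ZMod n)) (hCG : C ≤ G)
    (hC : Nonempty (C ≃g cyclePower n k))
    (hreg : ∀ v : ZMod n, (G.neighborSet v).ncard = 2 * k + 1) :
    ∃ D : Set (Σ u : ZMod n, Σ v : ZMod n, G.Walk u v),
      (∀ T ∈ D, T.2.2.IsPath ∧ T.2.2.length = 2 * k + 1 ∧
        ∃ e ∈ G.edgeSet \ C.edgeSet, T.2.2.edges[k]? = some e) ∧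
      ∀ e ∈ G.edgeSet, ∃! T, T ∈ D ∧ e ∈ T.2.2.edges := by
  classical
  haveI : NeZero n := ⟨by omega⟩
  obtain ⟨φ⟩ := hC
  -- cast injectivity
  have castinj : ∀ r r' : ℤ, (r - r').natAbs < n → ((r : ZMod n) = (r' : ZMod n)) → r = r' := by
    intro r r' hlt h
    have h0 : ((r - r' : ℤ) : ZMod n) = 0 := by push_cast [h]; ring
    have hd : (n : ℤ) ∣ (r - r') := (ZMod.intCast_zmod_eq_zero_iff_dvd _ _).mp h0
    have hd2 : n ∣ (r - r').natAbs := by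
      have := Int.natAbs_dvd_natAbs.mpr hd
      simpa using this
    have := Nat.eq_zero_of_dvd_of_lt hd2 hlt
    omega
  have cpAdj : ∀ (a : ZMod n) (r : ℤ), r ≠ 0 → r.natAbs ≤ k →
      (cyclePower n k).Adj a (a - (r : ZMod n)) := by
    intro a r hr0 hrk
    refine ⟨?_, r, hrk, by ring⟩
    intro hEq
    have : (r : ZMod n) = ((0 : ℤ) : ZMod n) := by
      have := sub_eq_zero.mpr hEq.symm
      simpa using this.symm
    exact hr0 (castinj r 0 (by omega) this)
  -- degree of C
  have hCnb : ∀ v : ZMod n, (C.neighborSet v).ncard = 2 * k := by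
    intro v
    have h1 : C.neighborSet v = φ.symm '' ((cyclePower n k).neighborSet (φ v)) := by
      ext y
      simp only [mem_neighborSet, Set.mem_image]
      constructor
      · intro h
        exact ⟨φ y, φ.map_adj_iff.mpr h, φ.symm_apply_apply y⟩
      · rintro ⟨b, hb, rfl⟩
        have : (cyclePower n k).Adj (φ v) (φ (φ.symm b)) := by
          rwa [φ.apply_symm_apply]
        exact φ.map_adj_iff.mp this
    rw [h1, Set.ncard_image_of_injective _ φ.symm.injective]
    have h2 : (cyclePower n k).neighborSet (φ v)
        = (fun r : ℤ => φ v - (r : ZMod n)) '' (Set.Icc (-(k:ℤ)) k \ {0}) := by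
      ext y
      simp only [mem_neighborSet, Set.mem_image, Set.mem_diff, Set.mem_Icc, Set.mem_singleton_iff]
      constructor
      · rintro ⟨hne, r, hrk, hr⟩
        refine ⟨r, ⟨by omega, ?_⟩, ?_⟩
        · rintro rfl
          apply hne
          have h0 : φ v - y = 0 := by simpa using hr
          exact sub_eq_zero.mp h0
        · rw [← hr]; ring
      · rintro ⟨r, ⟨hr1, hr2⟩, rfl⟩
        exact cpAdj (φ v) r hr2 (by omega)
    rw [h2, Set.ncard_image_of_injOn]
    · rw [Set.ncard_diff_singleton_of_mem (by simp only [Set.mem_Icc]; omega)]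
      rw [← Finset.coe_Icc, Set.ncard_coe_finset, Int.card_Icc]
      omega
    · intro r hr r' hr' hEq
      simp only [Set.mem_diff, Set.mem_Icc] at hr hr'
      have : (r : ZMod n) = (r' : ZMod n) := by
        have := sub_eq_zero.mpr hEq
        have h3 : (r' : ZMod n) - r = 0 := by
          rw [← this]; ring
        rw [sub_eq_zero] at h3
        exact h3.symm
      exact castinj r r' (by omega) this
  -- the matching function
  have hex : ∀ v, ∃ w, G.neighborSet v \ C.neighborSet v = {w} := by
    intro v
    apply Set.ncard_eq_one.mp
    have hsub : C.neighborSet v ⊆ G.neighborSet v := fun w hw => hCG hw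
    rw [Set.ncard_diff hsub (Set.toFinite _), hreg v, hCnb v]
    omega
  choose f hf using hex
  have hfspec : ∀ v w, (G.Adj v w ∧ ¬ C.Adj v w) ↔ w = f v := by
    intro v w
    rw [← Set.mem_singleton_iff, ← hf v]
    simp [Set.mem_diff, mem_neighborSet]
  have hGf : ∀ v, G.Adj v (f v) := fun v => (((hfspec v (f v)).mpr rfl)).1
  have hCf : ∀ v, ¬ C.Adj v (f v) := fun v => (((hfspec v (f v)).mpr rfl)).2
  have hne : ∀ v, v ≠ f v := fun v => (hGf v).ne
  have hff : ∀ v, f (f v) = v := by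
    intro v
    exact ((hfspec (f v) v).mp ⟨(hGf v).symm, fun h => hCf v h.symm⟩).symm
  have hfinj : ∀ a b, f a = f b → a = b := by
    intro a b h
    have := congrArg f h
    rwa [hff, hff] at this
  set S : Set (ZMod n) := {v : ZMod n | (f v).val < v.val} with hSdef
  have hSmem : ∀ v, v ∈ S ↔ (f v).val < v.val := fun v => Iff.rfl
  have hvalne : ∀ v, (f v).val ≠ v.val := by
    intro v h
    exact hne v (ZMod.val_injective n h).symm
  have hSor : ∀ v, v ∈ S ∨ f v ∈ S := by
    intro v
    rw [hSmem, hSmem, hff]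
    rcases Nat.lt_or_ge (f v).val v.val with h | h
    · exact Or.inl h
    · exact Or.inr (lt_of_le_of_ne h (Ne.symm (hvalne v)))
  have hSnot : ∀ v, v ∈ S → f v ∉ S := by
    intro v hv hfv
    rw [hSmem] at hv
    rw [hSmem, hff] at hfv
    omega
  -- zigzag positions
  set pp : ZMod n → ℕ → ZMod n := fun u i => φ.symm (φ u + ((zo i : ℤ) : ZMod n)) with hppdef
  have hpp0 : ∀ u, pp u 0 = u := by
    intro u
    simp [hppdef, zo_zero]
  have hppφ : ∀ u i, φ (pp u i) = φ u + ((zo i : ℤ) : ZMod n) := by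
    intro u i
    simp [hppdef]
  have ppinj : ∀ u i i', i ≤ k → i' ≤ k → pp u i = pp u i' → i = i' := by
    intro u i i' hi hi' h
    have h1 : φ u + ((zo i : ℤ) : ZMod n) = φ u + ((zo i' : ℤ) : ZMod n) := by
      have := congrArg φ h
      rwa [hppφ, hppφ] at this
    have h2 : ((zo i : ℤ) : ZMod n) = ((zo i' : ℤ) : ZMod n) := by
      exact add_left_cancel h1
    exact zo_inj (castinj _ _ (lt_of_le_of_lt (zo_sub_le hi hi') (by omega)) h2)
  have hadjC : ∀ u, ∀ i, i < k → C.Adj (pp u (i+1)) (pp u i) := by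
    intro u i hi
    have hr0 : (zo (i+1) - zo i) ≠ 0 := by
      have := zo_step i
      omega
    have hcp : (cyclePower n k).Adj (φ u + ((zo (i+1) : ℤ) : ZMod n))
        ((φ u + ((zo (i+1) : ℤ) : ZMod n)) - ((zo (i+1) - zo i : ℤ) : ZMod n)) :=
      cpAdj _ _ hr0 (by rw [zo_step]; omega)
    have heq : (φ u + ((zo (i+1) : ℤ) : ZMod n)) - ((zo (i+1) - zo i : ℤ) : ZMod n)
        = φ u + ((zo i : ℤ) : ZMod n) := by
      push_cast
      ring
    rw [heq] at hcp
    have := φ.symm.map_adj_iff.mpr hcp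
    simpa [hppdef] using this
  have hadjG : ∀ u, ∀ i, i < k → G.Adj (pp u (i+1)) (pp u i) := fun u i hi => hCG (hadjC u i hi)
  -- separation between the two halves
  have hsep : ∀ v i i', v ≠ f v → i ≤ k → i' ≤ k → pp v i ≠ pp (f v) i' := by
    intro v i i' hvfv hi hi' h
    have h1 : φ v + ((zo i : ℤ) : ZMod n) = φ (f v) + ((zo i' : ℤ) : ZMod n) := by
      have := congrArg φ h
      rwa [hppφ, hppφ] at this
    by_cases hz : zo i' - zo i = 0
    · have : φ v = φ (f v) := by
        have hzz : zo i = zo i' := by omega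
        rw [hzz] at h1
        exact add_right_cancel h1
      exact hvfv (φ.injective this)
    · have hcp : (cyclePower n k).Adj (φ v) (φ v - ((zo i' - zo i : ℤ) : ZMod n)) :=
        cpAdj _ _ hz (zo_sub_le hi' hi)
      have heq : φ v - ((zo i' - zo i : ℤ) : ZMod n) = φ (f v) := by
        push_cast
        push_cast at h1
        linear_combination h1
      rw [heq] at hcp
      exact hCf v (φ.map_adj_iff.mp hcp)
  -- the walks
  set w : (v : ZMod n) → G.Walk (pp v k) (pp (f v) k) := fun v =>
    ((zig G (pp v) k (fun i hi => hadjG v i hi)).copy rfl (hpp0 v)).append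
      (Walk.cons (hGf v)
        (((zig G (pp (f v)) k (fun i hi => hadjG (f v) i hi)).copy rfl (hpp0 (f v))).reverse))
    with hwdef
  have hlen : ∀ v, (w v).length = 2 * k + 1 := by
    intro v
    simp [hwdef, zig_length]
    omega
  have hedges : ∀ v, (w v).edges
      = ((List.range k).reverse.map (fun i => s(pp v (i+1), pp v i)))
        ++ s(v, f v) :: ((List.range k).reverse.map
            (fun i => s(pp (f v) (i+1), pp (f v) i))).reverse := by
    intro v
    simp [hwdef, Walk.edges_append, Walk.edges_cons, Walk.edges_reverse, Walk.edges_copy,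
      zig_edges, hpp0]
  have hgetk : ∀ v, (w v).edges[k]? = some s(v, f v) := by
    intro v
    rw [hedges v]
    rw [List.getElem?_append_right (by simp)]
    simp
  have hmemW : ∀ v e, e ∈ (w v).edges ↔ ((∃ i < k, e = s(pp v (i+1), pp v i)) ∨
      e = s(v, f v) ∨ (∃ i < k, e = s(pp (f v) (i+1), pp (f v) i))) := by
    intro v e
    rw [hedges v]
    simp only [List.mem_append, List.mem_cons, List.mem_reverse, List.mem_map, List.mem_range]
    constructor
    · rintro (⟨i, hi, rfl⟩ | rfl | ⟨i, hi, rfl⟩)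
      · exact Or.inl ⟨i, hi, rfl⟩
      · exact Or.inr (Or.inl rfl)
      · exact Or.inr (Or.inr ⟨i, hi, rfl⟩)
    · rintro (⟨i, hi, rfl⟩ | rfl | ⟨i, hi, rfl⟩)
      · exact Or.inl ⟨i, hi, rfl⟩
      · exact Or.inr (Or.inl rfl)
      · exact Or.inr (Or.inr ⟨i, hi, rfl⟩)
  have hpath : ∀ v, v ∈ S → (w v).IsPath := by
    intro v hv
    rw [Walk.isPath_def]
    have hsupp : (w v).support = ((List.range (k+1)).reverse.map (pp v))
        ++ ((List.range (k+1)).reverse.map (pp (f v))).reverse := by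
      simp [hwdef, Walk.support_append, Walk.support_cons, Walk.support_reverse,
        Walk.support_copy, zig_support]
    rw [hsupp]
    have hnd : ∀ u : ZMod n, ((List.range (k+1)).reverse.map (pp u)).Nodup := by
      intro u
      refine List.Nodup.map_on ?_ (by simp [List.nodup_range])
      intro i hi i' hi' h
      simp only [List.mem_reverse, List.mem_range] at hi hi'
      exact ppinj u i i' (by omega) (by omega) h
    refine List.Nodup.append (hnd v) (List.nodup_reverse.mpr (hnd (f v))) ?_
    intro x hx hx'
    simp only [List.mem_reverse, List.mem_map, List.mem_range] at hx hx'
    obtain ⟨i, hi, rfl⟩ := hx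
    obtain ⟨i', hi', h⟩ := hx'
    exact hsep v i i' (hne v) (by omega) (by omega) h.symm
  -- localization of C-edges
  have hCloc : ∀ e ∈ C.edgeSet, ∃ u, ∃ i < k, e = s(pp u (i+1), pp u i) := by
    intro e he
    induction e using Sym2.ind with
    | _ x y =>
    rw [mem_edgeSet] at he
    have hcp : (cyclePower n k).Adj (φ x) (φ y) := φ.map_adj_iff.mpr he
    obtain ⟨hne', r, hrk, hr⟩ := hcp
    have hr0 : r ≠ 0 := by
      rintro rfl
      have h0 : φ x - φ y = 0 := by simpa using hr
      exact hne' (sub_eq_zero.mp h0)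
    set s := r.natAbs with hs
    have hs1 : 1 ≤ s := by omega
    have hsk : s ≤ k := hrk
    have hy : φ y = φ x - ((r : ℤ) : ZMod n) := by rw [← hr]; ring
    have hpm := zo_pm s hs1
    have hrpm : r = (s:ℤ) ∨ r = -(s:ℤ) := Int.natAbs_eq r
    have hcase : r = zo s - zo (s-1) ∨ r = -(zo s - zo (s-1)) := by
      rcases hpm with h | h <;> rcases hrpm with h' | h' <;> omega
    rcases hcase with hc | hc
    · refine ⟨φ.symm (φ x - ((zo s : ℤ) : ZMod n)), s-1, by omega, ?_⟩
      have e1 : pp (φ.symm (φ x - ((zo s : ℤ) : ZMod n))) (s-1+1) = x := by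
        have hss : s - 1 + 1 = s := by omega
        rw [hss]
        apply φ.injective
        rw [hppφ, φ.apply_symm_apply]
        ring
      have e2 : pp (φ.symm (φ x - ((zo s : ℤ) : ZMod n))) (s-1) = y := by
        apply φ.injective
        rw [hppφ, φ.apply_symm_apply, hy, hc]
        push_cast
        ring
      rw [e1, e2]
    · refine ⟨φ.symm (φ x - ((zo (s-1) : ℤ) : ZMod n)), s-1, by omega, ?_⟩
      have e1 : pp (φ.symm (φ x - ((zo (s-1) : ℤ) : ZMod n))) (s-1) = x := by
        apply φ.injective
        rw [hppφ, φ.apply_symm_apply]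
        ring
      have e2 : pp (φ.symm (φ x - ((zo (s-1) : ℤ) : ZMod n))) (s-1+1) = y := by
        have hss : s - 1 + 1 = s := by omega
        rw [hss]
        apply φ.injective
        rw [hppφ, φ.apply_symm_apply, hy, hc]
        push_cast
        ring
      rw [e1, e2, Sym2.eq_swap]
  -- uniqueness of localization
  have hCuniq : ∀ u u' i i', i < k → i' < k →
      s(pp u (i+1), pp u i) = s(pp u' (i'+1), pp u' i') → u = u' := by
    intro u u' i i' hi hi' h
    have key : ∀ a b : ℕ, pp u a = pp u' b →
        φ u - φ u' = ((zo b - zo a : ℤ) : ZMod n) := by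
      intro a b hab
      have h2 := congrArg φ hab
      rw [hppφ, hppφ] at h2
      push_cast
      linear_combination h2
    rw [Sym2.eq_iff] at h
    rcases h with ⟨h1, h2⟩ | ⟨h1, h2⟩
    · have e1 := key _ _ h1
      have e2 := key _ _ h2
      have e3 : ((zo (i'+1) - zo (i+1) : ℤ) : ZMod n) = ((zo i' - zo i : ℤ) : ZMod n) :=
        e1.symm.trans e2
      have e4 : zo (i'+1) - zo (i+1) = zo i' - zo i := by
        refine castinj _ _ ?_ e3
        have b1 := zo_sub_le (show i'+1 ≤ k by omega) (show i+1 ≤ k by omega)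
        have b2 := zo_sub_le (show i' ≤ k by omega) (show i ≤ k by omega)
        omega
      have hii : i = i' := zo_case1 (by omega)
      subst hii
      have e5 : φ u - φ u' = 0 := by
        rw [e2]
        simp
      exact φ.injective (sub_eq_zero.mp e5)
    · have e1 := key _ _ h1
      have e2 := key _ _ h2
      have e3 : ((zo i' - zo (i+1) : ℤ) : ZMod n) = ((zo (i'+1) - zo i : ℤ) : ZMod n) :=
        e1.symm.trans e2
      have e4 : zo i' - zo (i+1) = zo (i'+1) - zo i := by
        refine castinj _ _ ?_ e3
        have b1 := zo_sub_le (show i' ≤ k by omega) (show i+1 ≤ k by omega)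
        have b2 := zo_sub_le (show i'+1 ≤ k by omega) (show i ≤ k by omega)
        omega
      exact absurd (show zo (i+1) - zo i = zo i' - zo (i'+1) by omega) (fun hh => zo_case2 hh)
  -- uniqueness of the S-representative
  have hSuniq : ∀ v v' u : ZMod n, v ∈ S → v' ∈ S → (u = v ∨ u = f v) → (u = v' ∨ u = f v') →
      v = v' := by
    rintro v v' u hv hv' (rfl | rfl) (h' | h')
    · exact h'
    · exact absurd (h' ▸ hv) (hSnot v' hv')
    · exact absurd (h' ▸ hv') (hSnot v hv)
    · exact hfinj v v' h'
  -- assemble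
  refine ⟨(fun v => (⟨pp v k, pp (f v) k, w v⟩ : Σ u : ZMod n, Σ x : ZMod n, G.Walk u x)) '' S,
    ?_, ?_⟩
  · rintro T ⟨v, hv, rfl⟩
    exact ⟨hpath v hv, hlen v,
      s(v, f v), ⟨(G.mem_edgeSet).mpr (hGf v), fun h => hCf v ((C.mem_edgeSet).mp h)⟩, hgetk v⟩
  · intro e he
    by_cases heC : e ∈ C.edgeSet
    · obtain ⟨u, i, hik, rfl⟩ := hCloc e heC
      obtain ⟨v, hv, hu⟩ : ∃ v, v ∈ S ∧ (u = v ∨ u = f v) := by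
        rcases hSor u with h | h
        · exact ⟨u, h, Or.inl rfl⟩
        · exact ⟨f u, h, Or.inr (hff u).symm⟩
      refine ⟨⟨pp v k, pp (f v) k, w v⟩, ⟨⟨v, hv, rfl⟩, ?_⟩, ?_⟩
      · show s(pp u (i+1), pp u i) ∈ (w v).edges
        rw [hmemW]
        rcases hu with rfl | h
        · exact Or.inl ⟨i, hik, rfl⟩
        · exact Or.inr (Or.inr ⟨i, hik, by rw [h]⟩)
      · rintro T' ⟨⟨v', hv', rfl⟩, hmem'⟩
        have hmem2 : s(pp u (i+1), pp u i) ∈ (w v').edges := hmem'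
        rw [hmemW] at hmem2
        have hnotmid : ∀ z : ZMod n, s(pp u (i+1), pp u i) ≠ s(z, f z) := by
          intro z hEq
          exact hCf z ((C.mem_edgeSet).mp (hEq ▸ heC))
        have hu' : u = v' ∨ u = f v' := by
          rcases hmem2 with ⟨i', hi', hEq⟩ | hEq | ⟨i', hi', hEq⟩
          · exact Or.inl (hCuniq u v' i i' hik hi' hEq)
          · exact absurd hEq (hnotmid v')
          · exact Or.inr (hCuniq u (f v') i i' hik hi' hEq)
        have hveq : v = v' := hSuniq v v' u hv hv' hu hu'
        subst hveq
        rfl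
    · induction e using Sym2.ind with
      | _ x y =>
      rw [mem_edgeSet] at he
      have hCxy : ¬ C.Adj x y := fun h => heC ((C.mem_edgeSet).mpr h)
      have hyfx : y = f x := (hfspec x y).mp ⟨he, hCxy⟩
      subst hyfx
      obtain ⟨v, hv, hu⟩ : ∃ v, v ∈ S ∧ (x = v ∨ x = f v) := by
        rcases hSor x with h | h
        · exact ⟨x, h, Or.inl rfl⟩
        · exact ⟨f x, h, Or.inr (hff x).symm⟩
      have hxe : s(x, f x) = s(v, f v) := by
        rcases hu with rfl | h
        · rfl
        · rw [h, hff]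
          exact Sym2.eq_swap
      refine ⟨⟨pp v k, pp (f v) k, w v⟩, ⟨⟨v, hv, rfl⟩, ?_⟩, ?_⟩
      · show s(x, f x) ∈ (w v).edges
        rw [hmemW]
        exact Or.inr (Or.inl hxe)
      · rintro T' ⟨⟨v', hv', rfl⟩, hmem'⟩
        have hmem2 : s(x, f x) ∈ (w v').edges := hmem'
        rw [hmemW] at hmem2
        have hnotzig : ∀ (z : ZMod n) (i' : ℕ), i' < k →
            s(x, f x) ≠ s(pp z (i'+1), pp z i') := by
          intro z i' hi' hEq
          exact heC (by rw [hEq]; exact (C.mem_edgeSet).mpr (hadjC z i' hi'))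
        have hx' : x = v' ∨ x = f v' := by
          rcases hmem2 with ⟨i', hi', hEq⟩ | hEq | ⟨i', hi', hEq⟩
          · exact absurd hEq (hnotzig v' i' hi')
          · rw [Sym2.eq_iff] at hEq
            rcases hEq with ⟨h1, h2⟩ | ⟨h1, h2⟩
            · exact Or.inl h1
            · exact Or.inr h1
          · exact absurd hEq (hnotzig (f v') i' hi')
        have hveq : v = v' := hSuniq v v' x hv hv' hu hx'
        subst hveq
        rfl
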